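/- Let X be a complete geodesic metric space and f⁰,…,fᵏ : X → ℝ an array of 1-convex locally Lipschitz functions. For x in the standard k-simplex Δᵏ let σ(x) = argmin Σᵢ xᵢ fⁱ (which exists and is unique). Then σ : Δᵏ → X is locally Lipschitz (hence Lipschitz, since Δᵏ is compact). -/

import Mathlib

open Set Metric Finset

def UnitSpeedOn {X : Type*} [MetricSpace X] (γ : ℝ → X) (L : ℝ) : Prop :=
  ∀ s ∈ Set.Icc (0:ℝ) L, ∀ t ∈ Set.Icc (0:ℝ) L, dist (γ s) (γ t) = |s - t|

def GeodesicSpace (X : Type*) [MetricSpace X] : Prop :=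
  ∀ x y : X, ∃ γ : ℝ → X, γ 0 = x ∧ γ (dist x y) = y ∧ UnitSpeedOn γ (dist x y)

def OneConvex {X : Type*} [MetricSpace X] (f : X → ℝ) : Prop :=
  ∀ (γ : ℝ → X) (L : ℝ), UnitSpeedOn γ L →
    ConvexOn ℝ (Set.Icc 0 L) (fun t => f (γ t) - t ^ 2 / 2)

lemma convexOn_finset_sum {ι : Type*} (t : Finset ι) {s : Set ℝ} (hs : Convex ℝ s)
    (g : ι → ℝ → ℝ) (h : ∀ i ∈ t, ConvexOn ℝ s (g i)) :
    ConvexOn ℝ s (fun z => ∑ i ∈ t, g i z) := by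
  classical
  induction t using Finset.cons_induction with
  | empty => simpa using convexOn_const 0 hs
  | cons a t ha ih =>
    simp only [Finset.sum_cons]
    exact (h a (Finset.mem_cons_self a t)).add (ih fun i hi => h i (Finset.mem_cons.2 (Or.inr hi)))

/-- The convex combination is 1-convex. -/
lemma oneConvex_comb {X : Type*} [MetricSpace X] {k : ℕ} (f : Fin (k + 1) → X → ℝ)
    (hconv : ∀ i, OneConvex (f i)) {x : Fin (k + 1) → ℝ}
    (hx : x ∈ stdSimplex ℝ (Fin (k + 1))) :
    OneConvex (fun z => ∑ i, x i * f i z) := by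
  intro γ L hγ
  have h1 : (fun t : ℝ => (∑ i, x i * f i (γ t)) - t ^ 2 / 2)
      = fun t : ℝ => ∑ i, x i • (f i (γ t) - t ^ 2 / 2) := by
    funext t
    have hsum : ∑ i, x i = 1 := hx.2
    simp only [smul_eq_mul, mul_sub, Finset.sum_sub_distrib, ← Finset.sum_mul, hsum, one_mul]
  rw [h1]
  exact convexOn_finset_sum _ (convex_Icc 0 L)
    (fun i => fun t => x i • (f i (γ t) - t ^ 2 / 2))
    (fun i _ => ((hconv i) γ L hγ).smul (hx.1 i))

/-- Key inequality: strong minimality. -/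
lemma keyA {X : Type*} [MetricSpace X] (hgeo : GeodesicSpace X) {k : ℕ}
    (f : Fin (k + 1) → X → ℝ) (hconv : ∀ i, OneConvex (f i))
    {x : Fin (k + 1) → ℝ} (hx : x ∈ stdSimplex ℝ (Fin (k + 1)))
    {p : X} (hp : ∀ y : X, ∑ i, x i * f i p ≤ ∑ i, x i * f i y) (z : X) :
    ∑ i, x i * f i p + dist p z ^ 2 / 2 ≤ ∑ i, x i * f i z := by
  set F : X → ℝ := fun w => ∑ i, x i * f i w with hF
  obtain ⟨γ, hγ0, hγd, hγ⟩ := hgeo p z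
  set d : ℝ := dist p z with hd
  have hd0 : 0 ≤ d := dist_nonneg
  rcases eq_or_lt_of_le hd0 with hdz | hdpos
  · have : d ^ 2 / 2 = 0 := by rw [← hdz]; norm_num
    rw [this]
    simpa using hp z
  have hcc : ConvexOn ℝ (Set.Icc 0 d) (fun t => F (γ t) - t ^ 2 / 2) :=
    oneConvex_comb f hconv hx γ d hγ
  refine le_of_forall_pos_le_add ?_
  intro ε hε
  set lam : ℝ := min 1 (2 * ε / d ^ 2) with hlam
  have hd2 : 0 < d ^ 2 := by positivity
  have hlam0 : 0 < lam := lt_min one_pos (by positivity)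
  have hlam1 : lam ≤ 1 := min_le_left _ _
  have hmem0 : (0:ℝ) ∈ Set.Icc (0:ℝ) d := ⟨le_refl _, hd0⟩
  have hmemd : d ∈ Set.Icc (0:ℝ) d := ⟨hd0, le_refl _⟩
  have hcx := hcc.2 hmem0 hmemd (by linarith : (0:ℝ) ≤ 1 - lam) (le_of_lt hlam0)
    (by ring : (1 - lam) + lam = 1)
  simp only [smul_eq_mul, mul_zero, zero_add] at hcx
  -- hcx : F (γ (lam * d)) - (lam*d)^2/2 ≤ (1-lam) * (F (γ 0) - 0) + lam * (F (γ d) - d^2/2)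
  have h0 : γ 0 = p := hγ0
  have hdz' : γ d = z := hγd
  have hmin : F p ≤ F (γ (lam * d)) := hp _
  rw [h0, hdz'] at hcx
  have hle : lam * d ^ 2 / 2 ≤ ε := by
    have h2 : lam ≤ 2 * ε / d ^ 2 := min_le_right _ _
    have h3 : lam * d ^ 2 ≤ 2 * ε := by
      calc lam * d ^ 2 ≤ (2 * ε / d ^ 2) * d ^ 2 :=
            mul_le_mul_of_nonneg_right h2 (le_of_lt hd2)
        _ = 2 * ε := by field_simp
    linarith
  nlinarith [hcx, hmin, hle]

lemma keyB {X : Type*} [MetricSpace X] (hgeo : GeodesicSpace X) {k : ℕ}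
    (f : Fin (k + 1) → X → ℝ) (hconv : ∀ i, OneConvex (f i))
    (σ : (Fin (k + 1) → ℝ) → X)
    (hσ : ∀ x ∈ stdSimplex ℝ (Fin (k + 1)), ∀ y : X,
      ∑ i, x i * f i (σ x) ≤ ∑ i, x i * f i y)
    {x y : Fin (k + 1) → ℝ} (hx : x ∈ stdSimplex ℝ (Fin (k + 1)))
    (hy : y ∈ stdSimplex ℝ (Fin (k + 1))) :
    dist (σ x) (σ y) ^ 2 ≤ ∑ i, (x i - y i) * (f i (σ y) - f i (σ x)) := by
  have h1 := keyA hgeo f hconv hx (hσ x hx) (σ y)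
  have h2 := keyA hgeo f hconv hy (hσ y hy) (σ x)
  have hdc : dist (σ y) (σ x) = dist (σ x) (σ y) := dist_comm _ _
  rw [hdc] at h2
  have hsum : ∑ i, (x i - y i) * (f i (σ y) - f i (σ x))
      = ((∑ i, x i * f i (σ y)) - (∑ i, x i * f i (σ x)))
        - ((∑ i, y i * f i (σ y)) - (∑ i, y i * f i (σ x))) := by
    simp only [sub_mul, mul_sub, Finset.sum_sub_distrib]
    ring
  rw [hsum]
  linarith

lemma comb_le_sup {k : ℕ} {x : Fin (k + 1) → ℝ} (hx : x ∈ stdSimplex ℝ (Fin (k + 1)))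
    (g : Fin (k + 1) → ℝ) :
    ∑ i, x i * g i ≤ Finset.univ.sup' ⟨0, Finset.mem_univ 0⟩ g := by
  calc ∑ i, x i * g i ≤ ∑ i, x i * Finset.univ.sup' ⟨0, Finset.mem_univ 0⟩ g :=
        Finset.sum_le_sum (fun i _ =>
          mul_le_mul_of_nonneg_left (Finset.le_sup' g (Finset.mem_univ i)) (hx.1 i))
    _ = _ := by rw [← Finset.sum_mul, hx.2, one_mul]

lemma inf_le_comb {k : ℕ} {x : Fin (k + 1) → ℝ} (hx : x ∈ stdSimplex ℝ (Fin (k + 1)))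
    (g : Fin (k + 1) → ℝ) :
    Finset.univ.inf' ⟨0, Finset.mem_univ 0⟩ g ≤ ∑ i, x i * g i := by
  calc Finset.univ.inf' ⟨0, Finset.mem_univ 0⟩ g
      = ∑ i, x i * Finset.univ.inf' ⟨0, Finset.mem_univ 0⟩ g := by
        rw [← Finset.sum_mul, hx.2, one_mul]
    _ ≤ ∑ i, x i * g i :=
        Finset.sum_le_sum (fun i _ =>
          mul_le_mul_of_nonneg_left (Finset.inf'_le g (Finset.mem_univ i)) (hx.1 i))

set_option maxHeartbeats 2000000 in
lemma keyLoc {X : Type*} [MetricSpace X] (hgeo : GeodesicSpace X) {k : ℕ}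
    (f : Fin (k + 1) → X → ℝ) (hconv : ∀ i, OneConvex (f i))
    (hlip : ∀ i, LocallyLipschitz (f i)) (σ : (Fin (k + 1) → ℝ) → X)
    (hσ : ∀ x ∈ stdSimplex ℝ (Fin (k + 1)), ∀ y : X,
      ∑ i, x i * f i (σ x) ≤ ∑ i, x i * f i y)
    (c : Fin (k + 1) → ℝ) (hc : ∀ i (z : X), c i ≤ f i z)
    {x₀ : Fin (k + 1) → ℝ} (hx₀ : x₀ ∈ stdSimplex ℝ (Fin (k + 1))) :
    ∃ ε > 0, ∃ K : ℝ, 0 ≤ K ∧ ∀ x ∈ stdSimplex ℝ (Fin (k + 1)),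
      ∀ y ∈ stdSimplex ℝ (Fin (k + 1)), dist x x₀ < ε → dist y x₀ < ε →
        dist (σ x) (σ y) ≤ K * dist x y := by
  classical
  set p₀ := σ x₀ with hp₀
  have hne : (Finset.univ : Finset (Fin (k + 1))).Nonempty := ⟨0, Finset.mem_univ 0⟩
  -- Lipschitz constants near p₀
  have hLT : ∀ i : Fin (k + 1), ∃ r : ℝ, 0 < r ∧ ∃ Ki : NNReal,
      ∀ a ∈ ball p₀ r, ∀ b ∈ ball p₀ r, dist (f i a) (f i b) ≤ (Ki : ℝ) * dist a b := by
    intro i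
    obtain ⟨Ki, t, ht, hK⟩ := hlip i p₀
    obtain ⟨r, hr, hball⟩ := Metric.mem_nhds_iff.1 ht
    exact ⟨r, hr, Ki, fun a ha b hb => hK.dist_le_mul a (hball ha) b (hball hb)⟩
  choose r hr K hK using hLT
  set rmin : ℝ := Finset.univ.inf' hne r with hrmin_def
  have hrmin : 0 < rmin := (Finset.lt_inf'_iff _).2 fun i _ => hr i
  set L : ℝ := Finset.univ.sup' hne (fun i => (K i : ℝ)) with hL_def
  have hL0 : 0 ≤ L := le_trans (K (0 : Fin (k+1))).coe_nonneg
    (Finset.le_sup' (fun j => ((K j : ℝ))) (Finset.mem_univ (0 : Fin (k+1))))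
  have hLip : ∀ i : Fin (k + 1), ∀ a ∈ ball p₀ rmin, ∀ b ∈ ball p₀ rmin,
      dist (f i a) (f i b) ≤ L * dist a b := by
    intro i a ha b hb
    have hsub : ball p₀ rmin ⊆ ball p₀ (r i) :=
      ball_subset_ball (Finset.inf'_le r (Finset.mem_univ i))
    calc dist (f i a) (f i b) ≤ (K i : ℝ) * dist a b := hK i a (hsub ha) b (hsub hb)
      _ ≤ L * dist a b := mul_le_mul_of_nonneg_right
          (Finset.le_sup' (fun j => ((K j : ℝ))) (Finset.mem_univ i)) dist_nonneg
  -- positive coordinates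
  obtain ⟨i₀, hi₀⟩ : ∃ i, 0 < x₀ i := by
    by_contra h
    push_neg at h
    have hz : ∑ i, x₀ i = 0 :=
      Finset.sum_eq_zero fun i _ => le_antisymm (h i) (hx₀.1 i)
    rw [hx₀.2] at hz; norm_num at hz
  set S : Finset (Fin (k + 1)) := Finset.univ.filter (fun i => 0 < x₀ i) with hS_def
  have hSne : S.Nonempty := ⟨i₀, Finset.mem_filter.2 ⟨Finset.mem_univ _, hi₀⟩⟩
  set μ : ℝ := S.inf' hSne x₀ with hμ_def
  have hμ : 0 < μ := (Finset.lt_inf'_iff _).2 fun i hi => (Finset.mem_filter.1 hi).2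
  set M : ℝ := Finset.univ.sup' hne (fun i => f i p₀ - c i) with hM_def
  have hM0 : 0 ≤ M :=
    le_trans (sub_nonneg.2 (hc 0 p₀))
      (Finset.le_sup' (fun i => f i p₀ - c i) (Finset.mem_univ (0 : Fin (k+1))))
  set C : ℝ := (((k : ℝ) + 1) + 2 / μ) * M with hC_def
  have hC0 : 0 ≤ C := mul_nonneg (by positivity) hM0
  -- continuity estimate
  have hcont : ∀ x ∈ stdSimplex ℝ (Fin (k + 1)), dist x x₀ ≤ μ / 2 →
      dist (σ x) p₀ ^ 2 ≤ 2 * C * dist x x₀ := by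
    intro x hx hδ
    set δ := dist x x₀ with hδ_def
    have hδ0 : 0 ≤ δ := dist_nonneg
    set d := dist (σ x) p₀ with hd_def
    have h1 := keyA hgeo f hconv hx (hσ x hx) p₀
    have h2 := hσ x₀ hx₀ (σ x)
    have hai : ∀ i, |x i - x₀ i| ≤ δ := by
      intro i
      have := dist_le_pi_dist x x₀ i
      rwa [Real.dist_eq] at this
    -- bound A
    have hA : ∀ i ∈ Finset.univ, (x i - x₀ i) * (f i p₀ - c i) ≤ δ * M := by
      intro i _
      have h3 : f i p₀ - c i ≤ M := Finset.le_sup' (fun j => f j p₀ - c j) (Finset.mem_univ i)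
      have h4 : (0:ℝ) ≤ f i p₀ - c i := sub_nonneg.2 (hc i p₀)
      have h5 := (abs_le.1 (hai i)).2
      nlinarith
    -- bound B
    have hB : ∀ i ∈ Finset.univ,
        (x₀ i - x i) * (f i (σ x) - c i) ≤ 2 / μ * δ * (x i * (f i (σ x) - c i)) := by
      intro i _
      have hu : (0:ℝ) ≤ f i (σ x) - c i := sub_nonneg.2 (hc i (σ x))
      rcases le_or_gt (x₀ i) (x i) with hle | hlt
      · have hL : (x₀ i - x i) * (f i (σ x) - c i) ≤ 0 :=
          mul_nonpos_of_nonpos_of_nonneg (by linarith) hu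
        have hR : 0 ≤ 2 / μ * δ * (x i * (f i (σ x) - c i)) :=
          mul_nonneg (mul_nonneg (div_nonneg (by norm_num) hμ.le) hδ0)
            (mul_nonneg (hx.1 i) hu)
        linarith
      · have hiS : i ∈ S := Finset.mem_filter.2 ⟨Finset.mem_univ _, lt_of_le_of_lt (hx.1 i) hlt⟩
        have hμi : μ ≤ x₀ i := Finset.inf'_le x₀ hiS
        have h6 := (abs_le.1 (hai i)).1
        have hxi : μ / 2 ≤ x i := by linarith
        rw [div_mul_eq_mul_div, div_mul_eq_mul_div, le_div_iff₀ hμ]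
        nlinarith [mul_le_mul_of_nonneg_right (show x₀ i - x i ≤ δ by linarith) hu,
          mul_nonneg hδ0 hu]
    have hsum_eq : ∑ i, (x i - x₀ i) * (f i p₀ - c i)
        + ∑ i, (x₀ i - x i) * (f i (σ x) - c i)
        = ((∑ i, x i * f i p₀) - (∑ i, x₀ i * f i p₀))
          + ((∑ i, x₀ i * f i (σ x)) - (∑ i, x i * f i (σ x))) := by
      simp only [sub_mul, mul_sub, Finset.sum_sub_distrib]
      ring
    have hsumA : ∑ i, (x i - x₀ i) * (f i p₀ - c i) ≤ ((k : ℝ) + 1) * (δ * M) := by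
      calc ∑ i, (x i - x₀ i) * (f i p₀ - c i) ≤ ∑ _i : Fin (k + 1), δ * M :=
            Finset.sum_le_sum hA
        _ = ((k : ℝ) + 1) * (δ * M) := by
            rw [Finset.sum_const, Finset.card_univ, Fintype.card_fin]
            push_cast; ring
    have hxu : ∑ i, x i * (f i (σ x) - c i) ≤ M := by
      have e1 : ∑ i, x i * (f i (σ x) - c i)
          = (∑ i, x i * f i (σ x)) - ∑ i, x i * c i := by
        simp only [mul_sub, Finset.sum_sub_distrib]
      have e2 : ∑ i, x i * (f i p₀ - c i)
          = (∑ i, x i * f i p₀) - ∑ i, x i * c i := by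
        simp only [mul_sub, Finset.sum_sub_distrib]
      have e3 : ∑ i, x i * (f i p₀ - c i) ≤ M := comb_le_sup hx _
      have hd2 : 0 ≤ d ^ 2 / 2 := by positivity
      linarith
    have hsumB : ∑ i, (x₀ i - x i) * (f i (σ x) - c i) ≤ 2 / μ * δ * M := by
      calc ∑ i, (x₀ i - x i) * (f i (σ x) - c i)
          ≤ ∑ i, 2 / μ * δ * (x i * (f i (σ x) - c i)) := Finset.sum_le_sum hB
        _ = 2 / μ * δ * ∑ i, x i * (f i (σ x) - c i) := by rw [← Finset.mul_sum]
        _ ≤ 2 / μ * δ * M := mul_le_mul_of_nonneg_left hxu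
            (mul_nonneg (div_nonneg (by norm_num) hμ.le) hδ0)
    have : d ^ 2 / 2 ≤ C * δ := by
      have := hsum_eq
      rw [hC_def]
      have hfin : d ^ 2 / 2 ≤ ((k : ℝ) + 1) * (δ * M) + 2 / μ * δ * M := by
        linarith
      calc d ^ 2 / 2 ≤ ((k : ℝ) + 1) * (δ * M) + 2 / μ * δ * M := hfin
        _ = (((k : ℝ) + 1) + 2 / μ) * M * δ := by ring
    linarith
  -- choose ε
  have hε0 : 0 < min (μ / 2) (rmin ^ 2 / (2 * C + 1)) :=
    lt_min (by linarith) (div_pos (pow_pos hrmin 2) (by linarith))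
  have hk1 : (0:ℝ) ≤ (k : ℝ) + 1 := add_nonneg (Nat.cast_nonneg k) zero_le_one
  have hK0 : 0 ≤ ((k : ℝ) + 1) * L := mul_nonneg hk1 hL0
  refine ⟨min (μ / 2) (rmin ^ 2 / (2 * C + 1)), hε0, ((k : ℝ) + 1) * L, hK0, ?_⟩
  intro x hx y hy hxε hyε
  have hball : ∀ z ∈ stdSimplex ℝ (Fin (k + 1)),
      dist z x₀ < min (μ / 2) (rmin ^ 2 / (2 * C + 1)) → σ z ∈ ball p₀ rmin := by
    intro z hz hzε
    have h1 : dist z x₀ ≤ μ / 2 := le_of_lt (lt_of_lt_of_le hzε (min_le_left _ _))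
    have h2 : dist z x₀ < rmin ^ 2 / (2 * C + 1) := lt_of_lt_of_le hzε (min_le_right _ _)
    have h3 := hcont z hz h1
    have h4 : 2 * C * dist z x₀ < rmin ^ 2 := by
      have h5 : 2 * C * dist z x₀ ≤ 2 * C * (rmin ^ 2 / (2 * C + 1)) :=
        mul_le_mul_of_nonneg_left h2.le (by linarith)
      have h6 : 2 * C * (rmin ^ 2 / (2 * C + 1)) < rmin ^ 2 := by
        rw [mul_div_assoc', div_lt_iff₀ (by positivity : (0:ℝ) < 2 * C + 1)]
        nlinarith
      linarith
    have h7 : dist (σ z) p₀ ^ 2 < rmin ^ 2 := lt_of_le_of_lt h3 h4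
    have h8 : dist (σ z) p₀ < rmin := by
      by_contra h
      push_neg at h
      nlinarith [dist_nonneg (x := σ z) (y := p₀)]
    exact mem_ball.2 h8
  have hσx := hball x hx hxε
  have hσy := hball y hy hyε
  set d := dist (σ x) (σ y) with hd_def
  have hd0 : 0 ≤ d := dist_nonneg
  have hkb := keyB hgeo f hconv σ hσ hx hy
  have hterm : ∀ i ∈ Finset.univ,
      (x i - y i) * (f i (σ y) - f i (σ x)) ≤ dist x y * (L * d) := by
    intro i _
    have h1 : |x i - y i| ≤ dist x y := by
      have := dist_le_pi_dist x y i
      rwa [Real.dist_eq] at this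
    have h2 : |f i (σ y) - f i (σ x)| ≤ L * d := by
      have := hLip i (σ y) hσy (σ x) hσx
      rw [Real.dist_eq] at this
      calc |f i (σ y) - f i (σ x)| ≤ L * dist (σ y) (σ x) := this
        _ = L * d := by rw [dist_comm]
    calc (x i - y i) * (f i (σ y) - f i (σ x))
        ≤ |(x i - y i) * (f i (σ y) - f i (σ x))| := le_abs_self _
      _ = |x i - y i| * |f i (σ y) - f i (σ x)| := abs_mul _ _
      _ ≤ dist x y * (L * d) :=
          mul_le_mul h1 h2 (abs_nonneg _) dist_nonneg
  have hsum : d ^ 2 ≤ ((k : ℝ) + 1) * (dist x y * (L * d)) := by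
    calc d ^ 2 ≤ ∑ i, (x i - y i) * (f i (σ y) - f i (σ x)) := hkb
      _ ≤ ∑ _i : Fin (k + 1), dist x y * (L * d) := Finset.sum_le_sum hterm
      _ = ((k : ℝ) + 1) * (dist x y * (L * d)) := by
          rw [Finset.sum_const, Finset.card_univ, Fintype.card_fin]
          push_cast; ring
  rcases eq_or_lt_of_le hd0 with hdz | hdpos
  · rw [← hdz]
    positivity
  · have h' : d * d ≤ (((k : ℝ) + 1) * L * dist x y) * d := by nlinarith
    exact le_of_mul_le_mul_right (by linarith [h']) hdpos


set_option maxHeartbeats 2000000 in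
theorem barycentric_simplex_lipschitz {X : Type*} [MetricSpace X] [CompleteSpace X]
    (hgeo : GeodesicSpace X) (k : ℕ) (f : Fin (k + 1) → X → ℝ)
    (hconv : ∀ i, OneConvex (f i)) (hlip : ∀ i, LocallyLipschitz (f i))
    (σ : (Fin (k + 1) → ℝ) → X)
    (hσ : ∀ x ∈ stdSimplex ℝ (Fin (k + 1)), ∀ y : X,
      ∑ i, x i * f i (σ x) ≤ ∑ i, x i * f i y) :
    ∃ K : NNReal, LipschitzOnWith K σ (stdSimplex ℝ (Fin (k + 1))) := by
  classical
  have hne : (Finset.univ : Finset (Fin (k + 1))).Nonempty := ⟨0, Finset.mem_univ 0⟩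
  have hvert : ∀ i : Fin (k + 1),
      (fun j => if j = i then (1:ℝ) else 0) ∈ stdSimplex ℝ (Fin (k + 1)) := by
    intro i
    constructor
    · intro j; by_cases h : j = i <;> simp [h]
    · simp
  set c : Fin (k + 1) → ℝ :=
    fun i => f i (σ (fun j => if j = i then (1:ℝ) else 0)) with hc_def
  have hsum_e : ∀ (i : Fin (k + 1)) (z : X),
      ∑ j, (if j = i then (1:ℝ) else 0) * f j z = f i z := by
    intro i z
    rw [Finset.sum_eq_single i]
    · simp
    · intro j _ hj; simp [hj]
    · intro h; exact absurd (Finset.mem_univ i) h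
  have hc : ∀ (i : Fin (k + 1)) (z : X), c i ≤ f i z := by
    intro i z
    have h := hσ _ (hvert i) z
    rw [hsum_e i, hsum_e i] at h
    exact h
  -- local Lipschitz at each point of the simplex
  have hloc : ∀ z : {w : Fin (k + 1) → ℝ // w ∈ stdSimplex ℝ (Fin (k + 1))},
      ∃ ε > 0, ∃ K : ℝ, 0 ≤ K ∧ ∀ x ∈ stdSimplex ℝ (Fin (k + 1)),
        ∀ y ∈ stdSimplex ℝ (Fin (k + 1)), dist x z.1 < ε → dist y z.1 < ε →
          dist (σ x) (σ y) ≤ K * dist x y :=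
    fun z => keyLoc hgeo f hconv hlip σ hσ c hc z.2
  choose ε hε K hK0 hK using hloc
  -- bounded image
  set e0 : Fin (k + 1) → ℝ := fun j => if j = 0 then (1:ℝ) else 0 with he0_def
  have he0 : e0 ∈ stdSimplex ℝ (Fin (k + 1)) := hvert 0
  set pbar : X := σ e0 with hpbar
  obtain ⟨D, hD0, hD⟩ : ∃ D : ℝ, 0 ≤ D ∧
      ∀ x ∈ stdSimplex ℝ (Fin (k + 1)), dist (σ x) pbar ≤ D := by
    set Msup : ℝ := Finset.univ.sup' hne (fun i => f i pbar) with hMsup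
    set cinf : ℝ := Finset.univ.inf' hne c with hcinf
    refine ⟨Real.sqrt (2 * (Msup - cinf)), Real.sqrt_nonneg _, ?_⟩
    intro x hx
    have h1 := keyA hgeo f hconv hx (hσ x hx) pbar
    have h2 : ∑ i, x i * f i pbar ≤ Msup := comb_le_sup hx _
    have h3 : cinf ≤ ∑ i, x i * f i (σ x) := by
      calc cinf ≤ ∑ i, x i * c i := inf_le_comb hx c
        _ ≤ ∑ i, x i * f i (σ x) := Finset.sum_le_sum fun i _ =>
            mul_le_mul_of_nonneg_left (hc i _) (hx.1 i)
    have h4 : dist (σ x) pbar ^ 2 ≤ 2 * (Msup - cinf) := by linarith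
    have h5 := Real.sqrt_le_sqrt h4
    rwa [Real.sqrt_sq dist_nonneg] at h5
  -- finite subcover
  have hcover : stdSimplex ℝ (Fin (k + 1)) ⊆
      ⋃ z : {w : Fin (k + 1) → ℝ // w ∈ stdSimplex ℝ (Fin (k + 1))},
        ball z.1 (ε z / 2) := fun x hx =>
    Set.mem_iUnion.2 ⟨⟨x, hx⟩, mem_ball_self (half_pos (hε ⟨x, hx⟩))⟩
  obtain ⟨t, ht⟩ := (isCompact_stdSimplex ℝ (Fin (k + 1))).elim_finite_subcover
    (fun z => ball z.1 (ε z / 2)) (fun z => isOpen_ball) hcover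
  have htne : t.Nonempty := by
    obtain ⟨z, hz, _⟩ := Set.mem_iUnion₂.1 (ht he0)
    exact ⟨z, hz⟩
  set δ : ℝ := t.inf' htne (fun z => ε z / 2) with hδ_def
  have hδ0 : 0 < δ := (Finset.lt_inf'_iff _).2 fun z _ => half_pos (hε z)
  set Kmax : ℝ := t.sup' htne K with hKmax
  set Kfin : ℝ := max (max Kmax (2 * D / δ)) 0 with hKfin
  have hKfin0 : 0 ≤ Kfin := le_max_right _ _
  refine ⟨Real.toNNReal Kfin, ?_⟩
  apply LipschitzOnWith.of_dist_le_mul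
  intro u hu v hv
  have hcoe : ((Real.toNNReal Kfin : NNReal) : ℝ) = Kfin := Real.coe_toNNReal _ hKfin0
  rw [hcoe]
  rcases lt_or_ge (dist u v) δ with hlt | hge
  · obtain ⟨z, hz, hu'⟩ := Set.mem_iUnion₂.1 (ht hu)
    have hδz : δ ≤ ε z / 2 := Finset.inf'_le _ hz
    have hub := mem_ball.1 hu'
    have hu2 : dist u z.1 < ε z := by linarith
    have hv2 : dist v z.1 < ε z := by
      calc dist v z.1 ≤ dist v u + dist u z.1 := dist_triangle _ _ _
        _ < δ + ε z / 2 := by rw [dist_comm v u]; exact add_lt_add hlt hub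
        _ ≤ ε z := by linarith
    have hest := hK z u hu v hv hu2 hv2
    have hKz : K z ≤ Kfin :=
      le_trans (le_trans (Finset.le_sup' K hz) (le_max_left _ _)) (le_max_left _ _)
    calc dist (σ u) (σ v) ≤ K z * dist u v := hest
      _ ≤ Kfin * dist u v := mul_le_mul_of_nonneg_right hKz dist_nonneg
  · have h2D : dist (σ u) (σ v) ≤ 2 * D := by
      calc dist (σ u) (σ v) ≤ dist (σ u) pbar + dist pbar (σ v) := dist_triangle _ _ _
        _ ≤ D + D := add_le_add (hD u hu) (by rw [dist_comm]; exact hD v hv)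
        _ = 2 * D := by ring
    have hstep : 2 * D ≤ 2 * D / δ * dist u v := by
      rw [div_mul_eq_mul_div, le_div_iff₀ hδ0]
      exact mul_le_mul_of_nonneg_left hge (by linarith)
    have hKd : 2 * D / δ ≤ Kfin := le_trans (le_max_right Kmax _) (le_max_left _ _)
    calc dist (σ u) (σ v) ≤ 2 * D := h2D
      _ ≤ 2 * D / δ * dist u v := hstep
      _ ≤ Kfin * dist u v := mul_le_mul_of_nonneg_right hKd dist_nonneg
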